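/- Let D be a state divergence (a map assigning to every pair of density matrices on any finite-dimensional system an extended real number, satisfying the data processing inequality D(E(ρ)‖E(σ)) ≤ D(ρ‖σ) for every quantum channel E) that is superadditive under tensor products (D(ρ₁⊗ρ₂ ‖ σ₁⊗σ₂) ≥ D(ρ₁‖σ₁) + D(ρ₂‖σ₂)) and normalized (D(ρ‖ρ) = 0 for every density matrix ρ). Then for all quantum channels N, M from matrices on A to matrices on B: D(N‖M) ≤ D^reg(N‖M) ≤ D^A(N‖M). -/

import Mathlib

open scoped Kronecker ComplexOrder Classical

noncomputable section

/-- Square complex matrices indexed by `ι`. -/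
abbrev MatC (ι : Type*) := Matrix ι ι ℂ

/-- A density matrix: positive semidefinite with trace one. -/
def IsDensity {ι : Type*} [Fintype ι] (ρ : MatC ι) : Prop :=
  ρ.PosSemidef ∧ ρ.trace = 1

/-- Functional calculus for Hermitian matrices (junk value `0` otherwise). -/
def funCalc {ι : Type*} [Fintype ι] [DecidableEq ι] (X : MatC ι) (f : ℝ → ℝ) : MatC ι :=
  if hX : X.IsHermitian then
    (hX.eigenvectorUnitary : MatC ι) * Matrix.diagonal (fun i => (f (hX.eigenvalues i) : ℂ)) *
      star (hX.eigenvectorUnitary : MatC ι)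
  else 0

/-- Real matrix power by functional calculus, with the convention `0 ^ t = 0`
(powers taken on the support). -/
def matPow {ι : Type*} [Fintype ι] [DecidableEq ι] (X : MatC ι) (t : ℝ) : MatC ι :=
  funCalc X fun x => if x ≤ 0 then 0 else Real.rpow x t

/-- Base-2 matrix logarithm by functional calculus on the support. -/
def matLog2 {ι : Type*} [Fintype ι] [DecidableEq ι] (X : MatC ι) : MatC ι :=
  funCalc X fun x => if x ≤ 0 then 0 else Real.logb 2 x

/-- Trace of the positive part of a Hermitian matrix: the sum of its nonnegative
eigenvalues (junk value `0` for non-Hermitian input). -/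
def trPos {ι : Type*} [Fintype ι] [DecidableEq ι] (X : MatC ι) : ℝ :=
  if hX : X.IsHermitian then ∑ i, max (hX.eigenvalues i) 0 else 0

/-- Largest eigenvalue (operator norm for PSD matrices). -/
def maxEig {ι : Type*} [Fintype ι] [DecidableEq ι] (X : MatC ι) : ℝ :=
  if hX : X.IsHermitian then ⨆ i, hX.eigenvalues i else 0

/-- Support inclusion `supp ρ ⊆ supp σ`, expressed via kernels. -/
def SuppLe {ι : Type*} [Fintype ι] (ρ σ : MatC ι) : Prop :=
  ∀ v : ι → ℂ, σ.mulVec v = 0 → ρ.mulVec v = 0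

/-- `−log₂` with the convention `−log₂ 0 = +∞`, valued in extended reals. -/
def negLog2 (x : ℝ) : EReal := if x ≤ 0 then ⊤ else ((-Real.logb 2 x : ℝ) : EReal)

/-- `log₂` with the convention `log₂ 0 = −∞`, valued in extended reals. -/
def elog2 (x : ℝ) : EReal := if x ≤ 0 then ⊥ else ((Real.logb 2 x : ℝ) : EReal)

/-! ### Channels -/

/-- The Kronecker extension `id_R ⊗ N` of a linear map on matrices. -/
def idTensor (R : Type*) {A B : Type*} (N : MatC A →ₗ[ℂ] MatC B) :
    MatC (R × A) →ₗ[ℂ] MatC (R × B) where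
  toFun X := Matrix.of fun p q => N (Matrix.of fun a a' => X (p.1, a) (q.1, a')) p.2 q.2
  map_add' X Y := by
    ext p q
    show N (Matrix.of fun a a' => (X + Y) (p.1, a) (q.1, a')) p.2 q.2 = _
    have h : (Matrix.of fun a a' => (X + Y) (p.1, a) (q.1, a'))
        = (Matrix.of fun a a' => X (p.1, a) (q.1, a'))
          + (Matrix.of fun a a' => Y (p.1, a) (q.1, a')) := rfl
    rw [h, map_add]; rfl
  map_smul' c X := by
    ext p q
    show N (Matrix.of fun a a' => (c • X) (p.1, a) (q.1, a')) p.2 q.2 = _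
    have h : (Matrix.of fun a a' => (c • X) (p.1, a) (q.1, a'))
        = c • (Matrix.of fun a a' => X (p.1, a) (q.1, a')) := rfl
    rw [h, map_smul]; rfl

/-- The Kronecker extension `N ⊗ id_R`. -/
def tensorId (R : Type*) {A B : Type*} (N : MatC A →ₗ[ℂ] MatC B) :
    MatC (A × R) →ₗ[ℂ] MatC (B × R) where
  toFun X := Matrix.of fun p q => N (Matrix.of fun a a' => X (a, p.2) (a', q.2)) p.1 q.1
  map_add' X Y := by
    ext p q
    show N (Matrix.of fun a a' => (X + Y) (a, p.2) (a', q.2)) p.1 q.1 = _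
    have h : (Matrix.of fun a a' => (X + Y) (a, p.2) (a', q.2))
        = (Matrix.of fun a a' => X (a, p.2) (a', q.2))
          + (Matrix.of fun a a' => Y (a, p.2) (a', q.2)) := rfl
    rw [h, map_add]; rfl
  map_smul' c X := by
    ext p q
    show N (Matrix.of fun a a' => (c • X) (a, p.2) (a', q.2)) p.1 q.1 = _
    have h : (Matrix.of fun a a' => (c • X) (a, p.2) (a', q.2))
        = c • (Matrix.of fun a a' => X (a, p.2) (a', q.2)) := rfl
    rw [h, map_smul]; rfl

/-- Transport of a matrix map along equivalences of index types. -/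
def reindexChan {A A' B B' : Type*} (eA : A ≃ A') (eB : B ≃ B')
    (N : MatC A →ₗ[ℂ] MatC B) : MatC A' →ₗ[ℂ] MatC B' :=
  (Matrix.reindexLinearEquiv ℂ ℂ eB eB).toLinearMap ∘ₗ N ∘ₗ
    (Matrix.reindexLinearEquiv ℂ ℂ eA.symm eA.symm).toLinearMap

/-- The tensor product `N ⊗ M` of two matrix maps. -/
def tensorChan {A B C D : Type*} (N : MatC A →ₗ[ℂ] MatC B) (M : MatC C →ₗ[ℂ] MatC D) :
    MatC (A × C) →ₗ[ℂ] MatC (B × D) :=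
  tensorId D N ∘ₗ idTensor A M

/-- The `n`-fold tensor power `N^{⊗n}` of a matrix map, acting on matrices
indexed by `Fin n → A`. -/
def powChan {A B : Type*} (N : MatC A →ₗ[ℂ] MatC B) :
    (n : ℕ) → (MatC (Fin n → A) →ₗ[ℂ] MatC (Fin n → B))
  | 0 => reindexChan (Equiv.refl _) (Equiv.ofUnique (Fin 0 → A) (Fin 0 → B)) LinearMap.id
  | n + 1 =>
      reindexChan ((Fin.insertNthEquiv (fun _ => A) 0).symm : (Fin (n + 1) → A) ≃ A × (Fin n → A)).symm
        ((Fin.insertNthEquiv (fun _ => B) 0).symm : (Fin (n + 1) → B) ≃ B × (Fin n → B)).symm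
        (tensorChan N (powChan N n))

/-- Complete positivity and trace preservation (a quantum channel). -/
def IsCPTP {A B : Type*} [Fintype A] [Fintype B] (N : MatC A →ₗ[ℂ] MatC B) : Prop :=
  (∀ (R : Type) (fR : Fintype R) (X : MatC (R × A)),
      letI := fR
      X.PosSemidef → (idTensor R N X).PosSemidef) ∧
    ∀ X : MatC A, (N X).trace = X.trace

/-- The (unnormalized) maximally entangled projector `|Φ⟩⟨Φ|`. -/
def maxEnt (A : Type*) [DecidableEq A] : MatC (A × A) :=
  Matrix.of fun p q => (if p.1 = p.2 then (1 : ℂ) else 0) * (if q.1 = q.2 then 1 else 0)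

/-- The Choi matrix `J_N = (id_A ⊗ N)(|Φ⟩⟨Φ|)`. -/
def choiMat {A B : Type*} [DecidableEq A] (N : MatC A →ₗ[ℂ] MatC B) : MatC (A × B) :=
  idTensor A N (maxEnt A)

/-! ### State divergences -/

/-- The set of achievable Type II error values for tests with Type I error at most `ε`. -/
def betaSet {ι : Type*} [Fintype ι] [DecidableEq ι] (ε : ℝ) (ρ σ : MatC ι) : Set ℝ :=
  {x | ∃ T : MatC ι, T.PosSemidef ∧ (1 - T).PosSemidef ∧
    1 - ε ≤ ((T * ρ).trace).re ∧ x = ((T * σ).trace).re}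

/-- The hypothesis testing relative entropy `D_H^ε(ρ‖σ)`, valued in extended reals. -/
def DHe {ι : Type*} [Fintype ι] [DecidableEq ι] (ε : ℝ) (ρ σ : MatC ι) : EReal :=
  negLog2 (sInf (betaSet ε ρ σ))

/-- The Umegaki relative entropy `D(ρ‖σ)` (base 2), `+∞` if the support condition fails. -/
def relEnt {ι : Type*} [Fintype ι] [DecidableEq ι] (ρ σ : MatC ι) : EReal :=
  if SuppLe ρ σ then (((ρ * (matLog2 ρ - matLog2 σ)).trace).re : EReal) else ⊤

/-- The Petz Rényi divergence `D̄_α(ρ‖σ)` for `α ∈ (0,1)`, `+∞` when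
`tr[ρ^α σ^{1−α}] = 0`. -/
def petzD (α : ℝ) {ι : Type*} [Fintype ι] [DecidableEq ι] (ρ σ : MatC ι) : EReal :=
  if 0 < (((matPow ρ α * matPow σ (1 - α)).trace).re) then
    (((α - 1)⁻¹ * Real.logb 2 (((matPow ρ α * matPow σ (1 - α)).trace).re) : ℝ) : EReal)
  else ⊤

/-- The sandwiched Rényi divergence `D̃_α(ρ‖σ)` for `α > 1`. -/
def sandD (α : ℝ) {ι : Type*} [Fintype ι] [DecidableEq ι] (ρ σ : MatC ι) : EReal :=
  if SuppLe ρ σ then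
    ((((α - 1)⁻¹ *
        Real.logb 2
          (((matPow (matPow σ ((1 - α) / (2 * α)) * ρ * matPow σ ((1 - α) / (2 * α))) α).trace).re)) : ℝ) : EReal)
  else ⊤

/-- The max-relative entropy `D_max(ρ‖σ)`. -/
def Dmax {ι : Type*} [Fintype ι] (ρ σ : MatC ι) : EReal :=
  sInf {y : EReal | ∃ t : ℝ, ((t : ℂ) • σ - ρ).PosSemidef ∧ y = ((Real.logb 2 t : ℝ) : EReal)}

/-- Trace norm `‖X‖₁ = tr √(X†X)`. -/
def traceNorm {ι : Type*} [Fintype ι] [DecidableEq ι] (X : MatC ι) : ℝ :=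
  ((matPow (X.conjTranspose * X) 2⁻¹).trace).re

/-- Generalized fidelity of subnormalized states. -/
def genFid {ι : Type*} [Fintype ι] [DecidableEq ι] (ρ σ : MatC ι) : ℝ :=
  traceNorm (matPow ρ 2⁻¹ * matPow σ 2⁻¹) +
    Real.sqrt ((1 - (ρ.trace).re) * (1 - (σ.trace).re))

/-- Purified distance. -/
def purDist {ι : Type*} [Fintype ι] [DecidableEq ι] (ρ σ : MatC ι) : ℝ :=
  Real.sqrt (1 - (genFid ρ σ) ^ 2)

/-- The smooth max-relative entropy `D_max^ε(ρ‖σ)`. -/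
def DmaxSmooth (ε : ℝ) {ι : Type*} [Fintype ι] [DecidableEq ι] (ρ σ : MatC ι) : EReal :=
  sInf {y : EReal | ∃ ρ' : MatC ι, ρ'.PosSemidef ∧ ((ρ'.trace).re ≤ 1) ∧
    purDist ρ' ρ ≤ ε ∧ y = Dmax ρ' σ}

/-! ### Channel divergences -/

/-- A generalized state divergence: a function on pairs of matrices over every
finite system. -/
abbrev StateDiv :=
  ∀ (ι : Type) (_ : Fintype ι) (_ : DecidableEq ι), MatC ι → MatC ι → EReal

/-- The Umegaki relative entropy as a `StateDiv`. -/
def UmegakiD : StateDiv := fun ι fι dι ρ σ => @relEnt ι fι dι ρ σ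

/-- The sandwiched Rényi divergence as a `StateDiv`. -/
def SandD (α : ℝ) : StateDiv := fun ι fι dι ρ σ => @sandD α ι fι dι ρ σ

/-- The Petz Rényi divergence as a `StateDiv`. -/
def PetzD (α : ℝ) : StateDiv := fun ι fι dι ρ σ => @petzD α ι fι dι ρ σ

/-- The smooth max-relative entropy as a `StateDiv`. -/
def DmaxD (ε : ℝ) : StateDiv := fun ι fι dι ρ σ => @DmaxSmooth ε ι fι dι ρ σ

/-- The hypothesis-testing relative entropy as a `StateDiv`. -/
def DHD (ε : ℝ) : StateDiv := fun ι fι dι ρ σ => @DHe ι fι dι ε ρ σ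

/-- The channel divergence induced by a state divergence: supremum over all
finite reference systems `R` and input states `ψ` on `R × A`. -/
def chanDiv (D : StateDiv) {A B : Type} [Fintype A] [Fintype B] [DecidableEq B]
    (N M : MatC A →ₗ[ℂ] MatC B) : EReal :=
  sSup {x : EReal | ∃ (R : Type) (fR : Fintype R) (dR : DecidableEq R)
    (ψ : MatC (R × A)),
      letI := fR; letI := dR;
      IsDensity ψ ∧
        x = D (R × B) inferInstance inferInstance (idTensor R N ψ) (idTensor R M ψ)}

/-- The regularized channel divergence `sup_{n ≥ 1} (1/n) D(N^{⊗n}‖M^{⊗n})`. -/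
def regChanDiv (D : StateDiv) {A B : Type} [Fintype A] [Fintype B] [DecidableEq B]
    (N M : MatC A →ₗ[ℂ] MatC B) : EReal :=
  sSup {x : EReal | ∃ n : ℕ, 1 ≤ n ∧
    x = (((n : ℝ)⁻¹ : ℝ) : EReal) * chanDiv D (powChan N n) (powChan M n)}

/-- The amortized channel divergence. -/
def amortChanDiv (D : StateDiv) {A B : Type} [Fintype A] [Fintype B] [DecidableEq A]
    [DecidableEq B] (N M : MatC A →ₗ[ℂ] MatC B) : EReal :=
  sSup {x : EReal | ∃ (R : Type) (fR : Fintype R) (dR : DecidableEq R)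
    (ψ φ : MatC (R × A)),
      letI := fR; letI := dR;
      IsDensity ψ ∧ IsDensity φ ∧
        x = D (R × B) inferInstance inferInstance (idTensor R N ψ) (idTensor R M φ)
            - D (R × A) inferInstance inferInstance ψ φ}


/-! ### Discrimination strategies -/

/-- Tensor product of matrices over a (dependent) family of systems. -/
def piKron {n : ℕ} {κ : Fin n → Type} (X : ∀ i, MatC (κ i)) : MatC (∀ i, κ i) :=
  Matrix.of fun f g => ∏ i, X i (f i) (g i)

/-- A coherent (parallel) strategy for discriminating `n` uses of channels
`A → B`: a reference system `R`, an input state on `R × A^n` and a binary test. -/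
structure CohStrategy (A B : Type) [Fintype A] [DecidableEq A] [Fintype B] [DecidableEq B]
    (n : ℕ) where
  R : Type
  [fR : Fintype R]
  [dR : DecidableEq R]
  ψ : MatC (R × (Fin n → A))
  hψ : IsDensity ψ
  T : MatC (R × (Fin n → B))
  hT₁ : T.PosSemidef
  hT₂ : (1 - T).PosSemidef

attribute [instance] CohStrategy.fR CohStrategy.dR

/-- Type I error of a coherent strategy against the null hypothesis channel `N`. -/
def CohStrategy.typeI {A B : Type} [Fintype A] [DecidableEq A] [Fintype B] [DecidableEq B]
    {n : ℕ} (N : MatC A →ₗ[ℂ] MatC B) (S : CohStrategy A B n) : ℝ :=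
  (((1 - S.T) * idTensor S.R (powChan N n) S.ψ).trace).re

/-- Type II error of a coherent strategy against the alternative channel `M`. -/
def CohStrategy.typeII {A B : Type} [Fintype A] [DecidableEq A] [Fintype B] [DecidableEq B]
    {n : ℕ} (M : MatC A →ₗ[ℂ] MatC B) (S : CohStrategy A B n) : ℝ :=
  ((S.T * idTensor S.R (powChan M n) S.ψ).trace).re

/-- **Conjecture 1** (exponentially strong converse of channel hypothesis testing
under coherent strategies). -/
def Conjecture1 : Prop :=
  ∀ (A B : Type) (fA : Fintype A) (dA : DecidableEq A) (fB : Fintype B) (dB : DecidableEq B),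
    letI := fA; letI := dA; letI := fB; letI := dB;
    ∀ (N M : MatC A →ₗ[ℂ] MatC B), IsCPTP N → IsCPTP M → (choiMat N).PosDef →
      ∀ S : (n : ℕ) → CohStrategy A B n,
        regChanDiv UmegakiD N M <
          Filter.liminf
            (fun n : ℕ => -((((n : ℝ)⁻¹ : ℝ) : EReal) * elog2 ((S n).typeII M)))
            Filter.atTop →
        ∃ c : ℝ, 0 < c ∧ ∀ᶠ n : ℕ in Filter.atTop,
          1 - (S n).typeI N ≤ (2 : ℝ) ^ (-(c * n))


/-- A sequential (adaptive) strategy for discriminating `m + 1` uses of channels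
`A → B`: reference systems `R 0, …, R m`, an initial state on `R 0 × A`, adaptive
update channels `P i : R i × B → R (i+1) × A`, and a final binary test. -/
structure SeqStrategy (A B : Type) [Fintype A] [DecidableEq A] [Fintype B] [DecidableEq B]
    (m : ℕ) where
  R : Fin (m + 1) → Type
  [fR : ∀ i, Fintype (R i)]
  [dR : ∀ i, DecidableEq (R i)]
  ψ : MatC (R 0 × A)
  hψ : IsDensity ψ
  P : ∀ i : Fin m, MatC (R i.castSucc × B) →ₗ[ℂ] MatC (R i.succ × A)
  hP : ∀ i, IsCPTP (P i)
  T : MatC (R (Fin.last m) × B)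
  hT₁ : T.PosSemidef
  hT₂ : (1 - T).PosSemidef

attribute [instance] SeqStrategy.fR SeqStrategy.dR

/-- The intermediate testing states of a sequential strategy when the unknown
channel is `N`: after `i + 1` uses of the channel, on system `R i × B`. -/
def SeqStrategy.states {A B : Type} [Fintype A] [DecidableEq A] [Fintype B] [DecidableEq B]
    {m : ℕ} (S : SeqStrategy A B m) (N : MatC A →ₗ[ℂ] MatC B) :
    ∀ i : Fin (m + 1), MatC (S.R i × B) :=
  Fin.induction (idTensor (S.R 0) N S.ψ)
    (fun i prev => idTensor (S.R i.succ) N (S.P i prev))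

/-- The final testing state of a sequential strategy for channel `N`. -/
def SeqStrategy.finalState {A B : Type} [Fintype A] [DecidableEq A] [Fintype B]
    [DecidableEq B] {m : ℕ} (S : SeqStrategy A B m) (N : MatC A →ₗ[ℂ] MatC B) :
    MatC (S.R (Fin.last m) × B) :=
  S.states N (Fin.last m)

/-- Type I error of a sequential strategy against the null hypothesis channel `N`. -/
def SeqStrategy.typeI {A B : Type} [Fintype A] [DecidableEq A] [Fintype B] [DecidableEq B]
    {m : ℕ} (N : MatC A →ₗ[ℂ] MatC B) (S : SeqStrategy A B m) : ℝ :=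
  (((1 - S.T) * S.finalState N).trace).re

/-- Type II error of a sequential strategy against the alternative channel `M`. -/
def SeqStrategy.typeII {A B : Type} [Fintype A] [DecidableEq A] [Fintype B] [DecidableEq B]
    {m : ℕ} (M : MatC A →ₗ[ℂ] MatC B) (S : SeqStrategy A B m) : ℝ :=
  ((S.T * S.finalState M).trace).re

/-- A product strategy for discriminating `n` uses of channels `A → B`:
reference systems `R i`, product input states `φ i` on `R i × A`, and a binary
test on the joint output. -/
structure ProdStrategy (A B : Type) [Fintype A] [DecidableEq A] [Fintype B] [DecidableEq B]
    (n : ℕ) where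
  R : Fin n → Type
  [fR : ∀ i, Fintype (R i)]
  [dR : ∀ i, DecidableEq (R i)]
  φ : ∀ i, MatC (R i × A)
  hφ : ∀ i, IsDensity (φ i)
  T : MatC (∀ i, R i × B)
  hT₁ : T.PosSemidef
  hT₂ : (1 - T).PosSemidef

attribute [instance] ProdStrategy.fR ProdStrategy.dR

/-- The testing state of a product strategy for channel `N`. -/
def ProdStrategy.state {A B : Type} [Fintype A] [DecidableEq A] [Fintype B] [DecidableEq B]
    {n : ℕ} (S : ProdStrategy A B n) (N : MatC A →ₗ[ℂ] MatC B) : MatC (∀ i, S.R i × B) :=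
  piKron fun i => idTensor (S.R i) N (S.φ i)

/-- Type I error of a product strategy against the null hypothesis channel `N`. -/
def ProdStrategy.typeI {A B : Type} [Fintype A] [DecidableEq A] [Fintype B] [DecidableEq B]
    {n : ℕ} (N : MatC A →ₗ[ℂ] MatC B) (S : ProdStrategy A B n) : ℝ :=
  (((1 - S.T) * S.state N).trace).re

/-- Type II error of a product strategy against the alternative channel `M`. -/
def ProdStrategy.typeII {A B : Type} [Fintype A] [DecidableEq A] [Fintype B] [DecidableEq B]
    {n : ℕ} (M : MatC A →ₗ[ℂ] MatC B) (S : ProdStrategy A B n) : ℝ :=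
  ((S.T * S.state M).trace).re

/-- Extra: the `n`-fold power of a channel acting on matrices indexed by
`Fin n → R × A` (reference `R` paired with each channel input). -/
noncomputable def pairPow (R : Type) {A B : Type} (N : MatC A →ₗ[ℂ] MatC B) (n : ℕ) :
    MatC (Fin n → R × A) →ₗ[ℂ] MatC (Fin n → R × B) :=
  reindexChan (Equiv.arrowProdEquivProdArrow (Fin n) (fun _ => R) (fun _ => A)).symm
    (Equiv.arrowProdEquivProdArrow (Fin n) (fun _ => R) (fun _ => B)).symm
    (idTensor (Fin n → R) (powChan N n))

/-- The optimal hypothesis-testing relative entropy over product strategies. -/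
noncomputable def DHpro (ε : ℝ) {A B : Type} [Fintype A] [DecidableEq A] [Fintype B]
    [DecidableEq B] (N M : MatC A →ₗ[ℂ] MatC B) (n : ℕ) : EReal :=
  sSup {x : EReal | ∃ (R : Fin n → Type) (fR : ∀ i, Fintype (R i))
    (dR : ∀ i, DecidableEq (R i)) (φ : ∀ i, MatC (R i × A)),
      letI := fR; letI := dR;
      (∀ i, IsDensity (φ i)) ∧
        x = DHe ε (piKron fun i => idTensor (R i) N (φ i))
              (piKron fun i => idTensor (R i) M (φ i))}

/-- The optimal hypothesis-testing relative entropy over sequential strategies for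
`m + 1` channel uses. -/
noncomputable def DHseq (ε : ℝ) {A B : Type} [Fintype A] [DecidableEq A] [Fintype B]
    [DecidableEq B] (N M : MatC A →ₗ[ℂ] MatC B) (m : ℕ) : EReal :=
  sSup {x : EReal | ∃ S : SeqStrategy A B m,
    x = DHe ε (S.finalState N) (S.finalState M)}

/-- The strong converse exponent of channel discrimination under product strategies. -/
noncomputable def scExpPRO (r : ℝ) {A B : Type} [Fintype A] [DecidableEq A] [Fintype B]
    [DecidableEq B] (N M : MatC A →ₗ[ℂ] MatC B) : EReal :=
  sInf {e : EReal | ∃ S : (n : ℕ) → ProdStrategy A B n,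
    (Filter.limsup (fun n : ℕ => (((n : ℝ)⁻¹ : ℝ) : EReal) * elog2 ((S n).typeII M))
        Filter.atTop ≤ ((-r : ℝ) : EReal)) ∧
    e = -Filter.liminf (fun n : ℕ => (((n : ℝ)⁻¹ : ℝ) : EReal) * elog2 (1 - (S n).typeI N))
        Filter.atTop}

/-- The error exponent of channel discrimination under product strategies. -/
noncomputable def erExpPRO (r : ℝ) {A B : Type} [Fintype A] [DecidableEq A] [Fintype B]
    [DecidableEq B] (N M : MatC A →ₗ[ℂ] MatC B) : EReal :=
  sSup {e : EReal | ∃ S : (n : ℕ) → ProdStrategy A B n,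
    (Filter.limsup (fun n : ℕ => (((n : ℝ)⁻¹ : ℝ) : EReal) * elog2 ((S n).typeII M))
        Filter.atTop ≤ ((-r : ℝ) : EReal)) ∧
    e = -Filter.limsup (fun n : ℕ => (((n : ℝ)⁻¹ : ℝ) : EReal) * elog2 ((S n).typeI N))
        Filter.atTop}

/-- The error exponent of channel discrimination under coherent strategies. -/
noncomputable def erExpCOH (r : ℝ) {A B : Type} [Fintype A] [DecidableEq A] [Fintype B]
    [DecidableEq B] (N M : MatC A →ₗ[ℂ] MatC B) : EReal :=
  sSup {e : EReal | ∃ S : (n : ℕ) → CohStrategy A B n,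
    (Filter.limsup (fun n : ℕ => (((n : ℝ)⁻¹ : ℝ) : EReal) * elog2 ((S n).typeII M))
        Filter.atTop ≤ ((-r : ℝ) : EReal)) ∧
    e = -Filter.limsup (fun n : ℕ => (((n : ℝ)⁻¹ : ℝ) : EReal) * elog2 ((S n).typeI N))
        Filter.atTop}

set_option linter.unusedSectionVars false

section Aux
variable {A B C R : Type} [Fintype A] [DecidableEq A] [Fintype B] [DecidableEq B]
  [Fintype C] [DecidableEq C] [Fintype R] [DecidableEq R]

theorem reindexChan_apply {A' B' : Type} (eA : A ≃ A') (eB : B ≃ B') (F : MatC A →ₗ[ℂ] MatC B)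
    (X : MatC A') : reindexChan eA eB F X = (F (X.submatrix eA eA)).submatrix eB.symm eB.symm := rfl

theorem idTensor_id' : idTensor R (LinearMap.id : MatC A →ₗ[ℂ] MatC A) = LinearMap.id := by
  ext X p q; rfl

theorem idTensor_comp' (F : MatC B →ₗ[ℂ] MatC C) (G : MatC A →ₗ[ℂ] MatC B) (X : MatC (R × A)) :
    idTensor R (F ∘ₗ G) X = idTensor R F (idTensor R G X) := rfl

theorem idTensor_idTensor (F : MatC A →ₗ[ℂ] MatC B) (X : MatC (R × (C × A))) :
    idTensor R (idTensor C F) X =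
      (idTensor (R × C) F (X.submatrix (Equiv.prodAssoc R C A) (Equiv.prodAssoc R C A))).submatrix
        (Equiv.prodAssoc R C B).symm (Equiv.prodAssoc R C B).symm := rfl

theorem idTensor_tensorId (F : MatC A →ₗ[ℂ] MatC B) (X : MatC (R × (A × C))) :
    idTensor R (tensorId C F) X =
      (idTensor (R × C) F (X.submatrix
          ((Equiv.prodAssoc R C A).trans ((Equiv.refl R).prodCongr (Equiv.prodComm C A)))
          ((Equiv.prodAssoc R C A).trans ((Equiv.refl R).prodCongr (Equiv.prodComm C A))))).submatrix
        (((Equiv.prodAssoc R C B).trans ((Equiv.refl R).prodCongr (Equiv.prodComm C B)))).symm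
        (((Equiv.prodAssoc R C B).trans ((Equiv.refl R).prodCongr (Equiv.prodComm C B)))).symm := rfl

theorem idTensor_reindexChan {A' B' : Type} (eA : A ≃ A') (eB : B ≃ B')
    (F : MatC A →ₗ[ℂ] MatC B) (X : MatC (R × A')) :
    idTensor R (reindexChan eA eB F) X =
      (idTensor R F (X.submatrix ((Equiv.refl R).prodCongr eA) ((Equiv.refl R).prodCongr eA))).submatrix
        ((Equiv.refl R).prodCongr eB).symm ((Equiv.refl R).prodCongr eB).symm := rfl

theorem trace_submatrix_equiv' {ι κ : Type} [Fintype ι] [Fintype κ] (e : ι ≃ κ)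
    (M : MatC κ) : (M.submatrix e e).trace = M.trace := by
  simp [Matrix.trace, Matrix.submatrix_apply, Matrix.diag]
  exact Equiv.sum_comp e (fun i => M i i)

theorem isDensity_submatrix {ι κ : Type} [Fintype ι] [Fintype κ] (e : ι ≃ κ)
    {M : MatC κ} (hM : IsDensity M) : IsDensity (M.submatrix e e) :=
  ⟨hM.1.submatrix e, by rw [trace_submatrix_equiv' e]; exact hM.2⟩

theorem trace_idTensor (F : MatC A →ₗ[ℂ] MatC B)
    (hF : ∀ X : MatC A, (F X).trace = X.trace) (X : MatC (R × A)) :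
    (idTensor R F X).trace = X.trace := by
  simp only [Matrix.trace, Matrix.diag, Fintype.sum_prod_type]
  refine Finset.sum_congr rfl fun r _ => ?_
  exact (hF (Matrix.of fun a a' => X (r, a) (r, a'))).trans rfl

theorem isDensity_idTensor {F : MatC A →ₗ[ℂ] MatC B} (hF : IsCPTP F)
    {ψ : MatC (R × A)} (hψ : IsDensity ψ) : IsDensity (idTensor R F ψ) :=
  ⟨hF.1 R inferInstance ψ hψ.1, by rw [trace_idTensor F hF.2]; exact hψ.2⟩

end Aux

theorem isCPTP_id {A : Type} [Fintype A] : IsCPTP (LinearMap.id : MatC A →ₗ[ℂ] MatC A) :=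
  ⟨fun R fR X hX => by letI := fR; rw [idTensor_id']; exact hX, fun X => rfl⟩

theorem IsCPTP.comp {A B C : Type} [Fintype A] [Fintype B] [Fintype C]
    {F : MatC B →ₗ[ℂ] MatC C} {G : MatC A →ₗ[ℂ] MatC B}
    (hF : IsCPTP F) (hG : IsCPTP G) : IsCPTP (F ∘ₗ G) := by
  refine ⟨fun R fR X hX => ?_, fun X => ((hF.2 _).trans (hG.2 X))⟩
  letI := fR
  rw [idTensor_comp']
  exact hF.1 R fR _ (hG.1 R fR X hX)

theorem IsCPTP.reindexChan {A A' B B' : Type} [Fintype A] [Fintype A'] [Fintype B] [Fintype B']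
    (eA : A ≃ A') (eB : B ≃ B') {F : MatC A →ₗ[ℂ] MatC B} (hF : IsCPTP F) :
    IsCPTP (reindexChan eA eB F) := by
  constructor
  · intro R fR X hX
    letI := fR
    rw [idTensor_reindexChan]
    exact (hF.1 R fR _ (hX.submatrix _)).submatrix _
  · intro X
    rw [reindexChan_apply, trace_submatrix_equiv' eB.symm, hF.2, trace_submatrix_equiv' eA]

theorem IsCPTP.idTensor {A B C : Type} [Fintype A] [Fintype B] [Fintype C]
    {F : MatC A →ₗ[ℂ] MatC B} (hF : IsCPTP F) : IsCPTP (idTensor C F) := by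
  constructor
  · intro R fR X hX
    letI := fR
    rw [idTensor_idTensor]
    exact ((hF.1 (R × C) inferInstance _ (hX.submatrix _)).submatrix _)
  · exact trace_idTensor F hF.2

theorem tensorId_eq {A B C : Type} (F : MatC A →ₗ[ℂ] MatC B) (X : MatC (A × C)) :
    tensorId C F X = ((idTensor C F) (X.submatrix (Equiv.prodComm C A) (Equiv.prodComm C A))).submatrix
      (Equiv.prodComm C B).symm (Equiv.prodComm C B).symm := rfl

theorem IsCPTP.tensorId {A B C : Type} [Fintype A] [Fintype B] [Fintype C]
    {F : MatC A →ₗ[ℂ] MatC B} (hF : IsCPTP F) : IsCPTP (tensorId C F) := by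
  constructor
  · intro R fR X hX
    letI := fR
    rw [idTensor_tensorId]
    exact ((hF.1 (R × C) inferInstance _ (hX.submatrix _)).submatrix _)
  · intro X
    rw [tensorId_eq, trace_submatrix_equiv' (Equiv.prodComm C B).symm,
      trace_idTensor F hF.2, trace_submatrix_equiv' (Equiv.prodComm C A)]

theorem IsCPTP.powChan {A B : Type} [Fintype A] [Fintype B] [DecidableEq A] [DecidableEq B]
    {N : MatC A →ₗ[ℂ] MatC B} (hN : IsCPTP N) (n : ℕ) : IsCPTP (powChan N n) := by
  induction n with
  | zero => exact IsCPTP.reindexChan _ _ isCPTP_id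
  | succ n ih =>
      exact IsCPTP.reindexChan _ _ (IsCPTP.comp (IsCPTP.tensorId hN) (IsCPTP.idTensor ih))

theorem ereal_key (a b S : EReal) (n : ℕ) (h1 : a - b ≤ S) (h2 : b ≤ ((n : ℝ) : EReal) * S) :
    a ≤ (((n + 1 : ℕ) : ℝ) : EReal) * S := by
  induction S with
  | top =>
      rw [EReal.coe_mul_top_of_pos (by positivity)]
      exact le_top
  | bot =>
      have hb : b ≠ ⊤ := by
        intro h
        rcases Nat.eq_zero_or_pos n with hn | hn
        · subst hn; rw [h] at h2; simp at h2
        · rw [EReal.coe_mul_bot_of_pos (by exact_mod_cast hn)] at h2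
          exact absurd (le_bot_iff.1 h2) (h ▸ by simp)
      rw [EReal.coe_mul_bot_of_pos (by positivity)]
      have hab : a - b = ⊥ := le_bot_iff.1 h1
      rcases EReal.add_eq_bot_iff.1 hab with h | h
      · exact le_of_eq h
      · exact absurd (EReal.neg_eq_bot_iff.1 h) hb
  | coe s =>
      induction b with
      | top => exact absurd (top_le_iff.1 h2) (by rw [← EReal.coe_mul]; exact EReal.coe_ne_top _)
      | bot =>
          by_cases ha : a = ⊥
          · exact ha ▸ bot_le
          · rw [sub_eq_add_neg, EReal.neg_bot, EReal.add_top_of_ne_bot ha] at h1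
            exact absurd h1 (by simp)
      | coe r =>
          have h1' : a ≤ (s : EReal) + (r : EReal) :=
            (EReal.sub_le_iff_le_add (.inl (EReal.coe_ne_bot r))
              (.inl (EReal.coe_ne_top r))).1 h1
          have h2' : (r : EReal) ≤ ((n * s : ℝ) : EReal) := by rwa [← EReal.coe_mul] at h2
          calc a ≤ (s : EReal) + (r : EReal) := h1'
            _ ≤ (s : EReal) + ((n * s : ℝ) : EReal) := add_le_add_right h2' _
            _ = (((n + 1 : ℕ) : ℝ) : EReal) * (s : EReal) := by
                rw [← EReal.coe_add, ← EReal.coe_mul]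
                congr 1
                push_cast
                ring

theorem ereal_inv_mul (S x : EReal) (n : ℕ) (hn : 1 ≤ n) (h : x ≤ ((n : ℝ) : EReal) * S) :
    (((n : ℝ)⁻¹ : ℝ) : EReal) * x ≤ S := by
  have hn0 : (0 : ℝ) < (n : ℝ) := by exact_mod_cast hn
  have hpos : (0 : ℝ) < (n : ℝ)⁻¹ := by positivity
  have hpos' : (0 : EReal) ≤ (((n : ℝ)⁻¹ : ℝ) : EReal) := by exact_mod_cast hpos.le
  have hmono : (((n : ℝ)⁻¹ : ℝ) : EReal) * x ≤ (((n : ℝ)⁻¹ : ℝ) : EReal) * (((n : ℝ) : EReal) * S) :=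
    mul_le_mul_of_nonneg_left h hpos'
  refine hmono.trans (le_of_eq ?_)
  induction S with
  | top =>
      rw [EReal.coe_mul_top_of_pos hn0, EReal.coe_mul_top_of_pos hpos]
  | bot =>
      rw [EReal.coe_mul_bot_of_pos hn0, EReal.coe_mul_bot_of_pos hpos]
  | coe s =>
      rw [← EReal.coe_mul, ← EReal.coe_mul]
      congr 1
      field_simp

section Dlemmas
variable (D : StateDiv)
  (hdpi : ∀ (ι₁ ι₂ : Type) (f₁ : Fintype ι₁) (d₁ : DecidableEq ι₁)
      (f₂ : Fintype ι₂) (d₂ : DecidableEq ι₂) (E : MatC ι₁ →ₗ[ℂ] MatC ι₂),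
    letI := f₁; letI := d₁; letI := f₂; letI := d₂;
    IsCPTP E → ∀ ρ σ : MatC ι₁, IsDensity ρ → IsDensity σ →
      D ι₂ f₂ d₂ (E ρ) (E σ) ≤ D ι₁ f₁ d₁ ρ σ)

include hdpi in
theorem D_submatrix {ι₁ ι₂ : Type} [f₁ : Fintype ι₁] [d₁ : DecidableEq ι₁]
    [f₂ : Fintype ι₂] [d₂ : DecidableEq ι₂] (e : ι₂ ≃ ι₁) {ρ σ : MatC ι₁}
    (hρ : IsDensity ρ) (hσ : IsDensity σ) :
    D ι₂ f₂ d₂ (ρ.submatrix e e) (σ.submatrix e e) = D ι₁ f₁ d₁ ρ σ := by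
  have hE : IsCPTP (reindexChan e (Equiv.refl ι₂) (LinearMap.id : MatC ι₂ →ₗ[ℂ] MatC ι₂)) :=
    IsCPTP.reindexChan _ _ isCPTP_id
  have hE' : IsCPTP (reindexChan e.symm (Equiv.refl ι₁) (LinearMap.id : MatC ι₁ →ₗ[ℂ] MatC ι₁)) :=
    IsCPTP.reindexChan _ _ isCPTP_id
  have key : ∀ X : MatC ι₁,
      reindexChan e (Equiv.refl ι₂) (LinearMap.id : MatC ι₂ →ₗ[ℂ] MatC ι₂) X
        = X.submatrix e e := fun X => rfl
  have key' : ∀ X : MatC ι₁,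
      reindexChan e.symm (Equiv.refl ι₁) (LinearMap.id : MatC ι₁ →ₗ[ℂ] MatC ι₁)
        (X.submatrix e e) = X := by
    intro X
    ext i j
    simp [reindexChan_apply, Matrix.submatrix_apply]
  refine le_antisymm ?_ ?_
  · have h := hdpi ι₁ ι₂ f₁ d₁ f₂ d₂ _ hE ρ σ hρ hσ
    rwa [key, key] at h
  · have h := hdpi ι₂ ι₁ f₂ d₂ f₁ d₁ _ hE' (ρ.submatrix e e) (σ.submatrix e e)
      (isDensity_submatrix e hρ) (isDensity_submatrix e hσ)
    rwa [key', key'] at h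

end Dlemmas

section Main
variable (D : StateDiv)
  (hdpi : ∀ (ι₁ ι₂ : Type) (f₁ : Fintype ι₁) (d₁ : DecidableEq ι₁)
      (f₂ : Fintype ι₂) (d₂ : DecidableEq ι₂) (E : MatC ι₁ →ₗ[ℂ] MatC ι₂),
    letI := f₁; letI := d₁; letI := f₂; letI := d₂;
    IsCPTP E → ∀ ρ σ : MatC ι₁, IsDensity ρ → IsDensity σ →
      D ι₂ f₂ d₂ (E ρ) (E σ) ≤ D ι₁ f₁ d₁ ρ σ)
  (hnorm : ∀ (ι : Type) (fι : Fintype ι) (dι : DecidableEq ι) (ρ : MatC ι),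
    letI := fι; letI := dι;
    IsDensity ρ → D ι fι dι ρ ρ = 0)

include hdpi hnorm in
theorem mainBound {A B : Type} [Fintype A] [DecidableEq A] [Fintype B] [DecidableEq B]
    (N M : MatC A →ₗ[ℂ] MatC B) (hN : IsCPTP N) (hM : IsCPTP M) :
    ∀ (n : ℕ) (R : Type) (fR : Fintype R) (dR : DecidableEq R)
      (ψ : MatC (R × (Fin n → A))), IsDensity ψ →
      D (R × (Fin n → B)) inferInstance inferInstance
          (idTensor R (powChan N n) ψ) (idTensor R (powChan M n) ψ)
        ≤ ((n : ℝ) : EReal) * amortChanDiv D N M := by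
  intro n
  induction n with
  | zero =>
      intro R fR dR ψ hψ
      letI := fR; letI := dR
      have hd : IsDensity (idTensor R (powChan N 0) ψ) :=
        isDensity_idTensor (hN.powChan 0) hψ
      have heq : idTensor R (powChan M 0) ψ = idTensor R (powChan N 0) ψ := rfl
      rw [heq, hnorm _ inferInstance inferInstance _ hd]
      simp
  | succ n ih =>
      intro R fR dR ψ hψ
      letI := fR; letI := dR
      -- abbreviations
      set S := amortChanDiv D N M with hS
      let C := Fin n → B
      let A' := Fin n → A
      let e₁ : A × A' ≃ (Fin (n+1) → A) := ((Fin.insertNthEquiv (fun _ => A) 0).symm : (Fin (n + 1) → A) ≃ A × (Fin n → A)).symm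
      let e₂ : B × C ≃ (Fin (n+1) → B) := ((Fin.insertNthEquiv (fun _ => B) 0).symm : (Fin (n + 1) → B) ≃ B × (Fin n → B)).symm
      let g₁ : R × (A × A') ≃ R × (Fin (n+1) → A) := (Equiv.refl R).prodCongr e₁
      let g₂ : R × (B × C) ≃ R × (Fin (n+1) → B) := (Equiv.refl R).prodCongr e₂
      let aA : (R × A) × A' ≃ R × (A × A') := Equiv.prodAssoc R A A'
      let aB : (R × A) × C ≃ R × (A × C) := Equiv.prodAssoc R A C
      let E : (R × C) × A ≃ R × (A × C) :=
        (Equiv.prodAssoc R C A).trans ((Equiv.refl R).prodCongr (Equiv.prodComm C A))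
      let E' : (R × C) × B ≃ R × (B × C) :=
        (Equiv.prodAssoc R C B).trans ((Equiv.refl R).prodCongr (Equiv.prodComm C B))
      let ψ'' : MatC ((R × A) × A') := (ψ.submatrix g₁ g₁).submatrix aA aA
      have hψ'' : IsDensity ψ'' := isDensity_submatrix aA (isDensity_submatrix g₁ hψ)
      let ΨN : MatC ((R × A) × C) := idTensor (R × A) (powChan N n) ψ''
      let ΨM : MatC ((R × A) × C) := idTensor (R × A) (powChan M n) ψ''
      have hΨN : IsDensity ΨN := isDensity_idTensor (hN.powChan n) hψ''
      have hΨM : IsDensity ΨM := isDensity_idTensor (hM.powChan n) hψ''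
      let XN : MatC ((R × C) × A) := (ΨN.submatrix aB.symm aB.symm).submatrix E E
      let XM : MatC ((R × C) × A) := (ΨM.submatrix aB.symm aB.symm).submatrix E E
      have hXN : IsDensity XN := isDensity_submatrix E (isDensity_submatrix aB.symm hΨN)
      have hXM : IsDensity XM := isDensity_submatrix E (isDensity_submatrix aB.symm hΨM)
      let YN : MatC ((R × C) × B) := idTensor (R × C) N XN
      let YM : MatC ((R × C) × B) := idTensor (R × C) M XM
      have hYN : IsDensity YN := isDensity_idTensor hN hXN
      have hYM : IsDensity YM := isDensity_idTensor hM hXM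
      -- structural identification
      have hstructN : idTensor R (powChan N (n+1)) ψ
          = (YN.submatrix E'.symm E'.symm).submatrix g₂.symm g₂.symm := rfl
      have hstructM : idTensor R (powChan M (n+1)) ψ
          = (YM.submatrix E'.symm E'.symm).submatrix g₂.symm g₂.symm := rfl
      -- identify the D-value of the (n+1)-fold outputs
      have ha : D (R × (Fin (n+1) → B)) inferInstance inferInstance
            (idTensor R (powChan N (n+1)) ψ) (idTensor R (powChan M (n+1)) ψ)
          = D ((R × C) × B) inferInstance inferInstance YN YM := by
        rw [hstructN, hstructM,
          D_submatrix D hdpi g₂.symm (isDensity_submatrix E'.symm hYN)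
            (isDensity_submatrix E'.symm hYM),
          D_submatrix D hdpi E'.symm hYN hYM]
      -- identify the D-value of the n-fold intermediate states
      have hb : D ((R × C) × A) inferInstance inferInstance XN XM
          = D ((R × A) × C) inferInstance inferInstance ΨN ΨM := by
        rw [show XN = (ΨN.submatrix aB.symm aB.symm).submatrix E E from rfl,
          show XM = (ΨM.submatrix aB.symm aB.symm).submatrix E E from rfl,
          D_submatrix D hdpi E (isDensity_submatrix aB.symm hΨN)
            (isDensity_submatrix aB.symm hΨM),
          D_submatrix D hdpi aB.symm hΨN hΨM]
      -- amortized bound for one step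
      have hamort : D ((R × C) × B) inferInstance inferInstance YN YM
            - D ((R × C) × A) inferInstance inferInstance XN XM ≤ S := by
        apply le_sSup
        exact ⟨R × C, inferInstance, inferInstance, XN, XM, hXN, hXM, rfl⟩
      -- the induction hypothesis
      have hIH : D ((R × A) × C) inferInstance inferInstance ΨN ΨM
          ≤ ((n : ℝ) : EReal) * S := ih (R × A) inferInstance inferInstance ψ'' hψ''
      rw [ha]
      exact ereal_key _ _ S n hamort (hb ▸ hIH)

end Main

theorem pow_one_eq {A B R : Type} (N : MatC A →ₗ[ℂ] MatC B) (ψ : MatC (R × A)) :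
    idTensor R (powChan N 1)
        (ψ.submatrix ((Equiv.refl R).prodCongr (Equiv.funUnique (Fin 1) A))
          ((Equiv.refl R).prodCongr (Equiv.funUnique (Fin 1) A)))
      = (idTensor R N ψ).submatrix ((Equiv.refl R).prodCongr (Equiv.funUnique (Fin 1) B))
          ((Equiv.refl R).prodCongr (Equiv.funUnique (Fin 1) B)) := rfl
theorem stmt8 (D : StateDiv)
    (hdpi : ∀ (ι₁ ι₂ : Type) (f₁ : Fintype ι₁) (d₁ : DecidableEq ι₁)
        (f₂ : Fintype ι₂) (d₂ : DecidableEq ι₂) (E : MatC ι₁ →ₗ[ℂ] MatC ι₂),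
      letI := f₁; letI := d₁; letI := f₂; letI := d₂;
      IsCPTP E → ∀ ρ σ : MatC ι₁, IsDensity ρ → IsDensity σ →
        D ι₂ f₂ d₂ (E ρ) (E σ) ≤ D ι₁ f₁ d₁ ρ σ)
    (hsuper : ∀ (ι₁ ι₂ : Type) (f₁ : Fintype ι₁) (d₁ : DecidableEq ι₁)
        (f₂ : Fintype ι₂) (d₂ : DecidableEq ι₂) (ρ₁ σ₁ : MatC ι₁) (ρ₂ σ₂ : MatC ι₂),
      letI := f₁; letI := d₁; letI := f₂; letI := d₂;
      IsDensity ρ₁ → IsDensity σ₁ → IsDensity ρ₂ → IsDensity σ₂ →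
        D ι₁ f₁ d₁ ρ₁ σ₁ + D ι₂ f₂ d₂ ρ₂ σ₂ ≤
          D (ι₁ × ι₂) inferInstance inferInstance (ρ₁ ⊗ₖ ρ₂) (σ₁ ⊗ₖ σ₂))
    (hnorm : ∀ (ι : Type) (fι : Fintype ι) (dι : DecidableEq ι) (ρ : MatC ι),
      letI := fι; letI := dι;
      IsDensity ρ → D ι fι dι ρ ρ = 0)
    {A B : Type} [Fintype A] [DecidableEq A] [Fintype B] [DecidableEq B]
    (N M : MatC A →ₗ[ℂ] MatC B) (hN : IsCPTP N) (hM : IsCPTP M) :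
    chanDiv D N M ≤ regChanDiv D N M ∧ regChanDiv D N M ≤ amortChanDiv D N M := by
  constructor
  · -- chanDiv ≤ regChanDiv, via n = 1
    have h1 : chanDiv D N M ≤ chanDiv D (powChan N 1) (powChan M 1) := by
      apply sSup_le
      rintro x ⟨R, fR, dR, ψ, hψ, rfl⟩
      letI := fR; letI := dR
      set pA := (Equiv.refl R).prodCongr (Equiv.funUnique (Fin 1) A) with hpA
      set pB := (Equiv.refl R).prodCongr (Equiv.funUnique (Fin 1) B) with hpB
      have hψ' : IsDensity (ψ.submatrix pA pA) := isDensity_submatrix pA hψ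
      have hkey : D (R × (Fin 1 → B)) inferInstance inferInstance
            (idTensor R (powChan N 1) (ψ.submatrix pA pA))
            (idTensor R (powChan M 1) (ψ.submatrix pA pA))
          = D (R × B) inferInstance inferInstance (idTensor R N ψ) (idTensor R M ψ) := by
        rw [pow_one_eq N ψ, pow_one_eq M ψ,
          D_submatrix D hdpi pB (isDensity_idTensor hN hψ) (isDensity_idTensor hM hψ)]
      apply le_sSup
      exact ⟨R, fR, dR, ψ.submatrix pA pA, hψ', hkey.symm⟩
    refine h1.trans (le_sSup ?_)
    refine ⟨1, le_refl 1, ?_⟩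
    norm_num
  · -- regChanDiv ≤ amortChanDiv
    apply sSup_le
    rintro x ⟨n, hn, rfl⟩
    have hchan : chanDiv D (powChan N n) (powChan M n)
        ≤ ((n : ℝ) : EReal) * amortChanDiv D N M := by
      apply sSup_le
      rintro y ⟨R, fR, dR, ψ, hψ, rfl⟩
      exact mainBound D hdpi hnorm N M hN hM n R fR dR ψ hψ
    exact ereal_inv_mul _ _ n hn hchan

end
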